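/- Let F ⊆ E be linear acyclic and let x, y : E → ℝ both be F-tight. Then ||x − y||_∞ ≤ ||ρ_x − ρ_y||_1, i.e., max_{a∈E} |x_a − y_a| ≤ Σ_{i∈V} |ρ_x(i) − ρ_y(i)|. -/

import Mathlib

open Finset

/-- Net inflow `ρ_x(i)` of a vector `x : E → ℝ` at a node `i` of a finite directed
multigraph given by `tail, head : E → V`. -/
def netInflow {V E : Type*} [Fintype E] [DecidableEq V]
    (tail head : E → V) (x : E → ℝ) (i : V) : ℝ :=
  (∑ a ∈ Finset.univ.filter (fun a => head a = i), x a)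
    - (∑ a ∈ Finset.univ.filter (fun a => tail a = i), x a)

section Stmt6Aux

/-- The undirected simple graph on `V` whose edges are the vertex pairs joined by some
arc `b` satisfying `Q` with `b ≠ a`. -/
def lineGraph' {V E : Type*} (tail head : E → V) (Q : E → Prop) (a : E) : SimpleGraph V where
  Adj u v := u ≠ v ∧ ∃ b, Q b ∧ b ≠ a ∧
    ((tail b = u ∧ head b = v) ∨ (tail b = v ∧ head b = u))
  symm := ⟨by
    rintro u v ⟨h1, b, h2, h3, h4⟩
    exact ⟨h1.symm, b, h2, h3, h4.symm⟩⟩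
  loopless := ⟨fun u h => h.1 rfl⟩

lemma lineGraph'_adj {V E : Type*} (tail head : E → V) (Q : E → Prop) (a : E) (u v : V) :
    (lineGraph' tail head Q a).Adj u v ↔ (u ≠ v ∧ ∃ b, Q b ∧ b ≠ a ∧
      ((tail b = u ∧ head b = v) ∨ (tail b = v ∧ head b = u))) := Iff.rfl

lemma getVert_mem_support' {V : Type*} {G : SimpleGraph V} {u v : V}
    (p : G.Walk u v) (i : ℕ) : p.getVert i ∈ p.support := by
  induction p generalizing i with
  | nil =>
    rw [SimpleGraph.Walk.getVert_of_length_le _ (Nat.zero_le i)]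
    exact SimpleGraph.Walk.end_mem_support _
  | cons h q ih =>
    cases i with
    | zero => simp
    | succ n =>
      rw [SimpleGraph.Walk.getVert_cons_succ, SimpleGraph.Walk.support_cons]
      exact List.mem_cons_of_mem _ (ih n)

lemma getVert_injOn' {V : Type*} {G : SimpleGraph V} {u v : V}
    (p : G.Walk u v) (hp : p.IsPath) :
    ∀ i, i ≤ p.length → ∀ j, j ≤ p.length → p.getVert i = p.getVert j → i = j := by
  induction p with
  | nil =>
    intro i hi j hj _
    simp only [SimpleGraph.Walk.length_nil, Nat.le_zero] at hi hj
    omega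
  | cons hadj q ih =>
    rw [SimpleGraph.Walk.cons_isPath_iff] at hp
    intro i hi j hj hij
    rw [SimpleGraph.Walk.length_cons] at hi hj
    rcases i with _ | i <;> rcases j with _ | j
    · rfl
    · rw [SimpleGraph.Walk.getVert_zero, SimpleGraph.Walk.getVert_cons_succ] at hij
      exact absurd (hij.symm ▸ getVert_mem_support' q j) hp.2
    · rw [SimpleGraph.Walk.getVert_zero, SimpleGraph.Walk.getVert_cons_succ] at hij
      exact absurd (hij ▸ getVert_mem_support' q i) hp.2
    · rw [SimpleGraph.Walk.getVert_cons_succ, SimpleGraph.Walk.getVert_cons_succ] at hij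
      exact congrArg Nat.succ (ih hp.1 i (by omega) j (by omega) hij)

lemma cycle_of_reachable {V E : Type*} [DecidableEq V]
    (tail head : E → V) (Q : E → Prop) (a : E) (hQa : Q a)
    (G : SimpleGraph V)
    (hG : ∀ u v, G.Adj u v → ∃ b, Q b ∧ b ≠ a ∧
        ((tail b = u ∧ head b = v) ∨ (tail b = v ∧ head b = u)))
    (h : G.Reachable (head a) (tail a)) :
    ∃ (k : ℕ) (c : Fin (k + 1) → E) (s : Fin (k + 1) → Bool),
      (∀ i, Q (c i)) ∧ Function.Injective c ∧
      Function.Injective (fun i => if s i then tail (c i) else head (c i)) ∧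
      ∀ i : Fin (k + 1), (if s i then head (c i) else tail (c i)) =
        (if s (i + 1) then tail (c (i + 1)) else head (c (i + 1))) := by
  classical
  obtain ⟨w⟩ := h
  obtain ⟨p, hp⟩ : ∃ p : G.Walk (head a) (tail a), p.IsPath := ⟨w.toPath.1, w.toPath.2⟩
  set n := p.length with hn
  set v : ℕ → V := p.getVert with hv
  have hv0 : v 0 = head a := p.getVert_zero
  have hvn : v n = tail a := p.getVert_length
  have hvinj : ∀ i, i ≤ n → ∀ j, j ≤ n → v i = v j → i = j := getVert_injOn' p hp
  have hadj : ∀ j, j < n → G.Adj (v j) (v (j + 1)) := fun j hj => p.adj_getVert_succ hj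
  have hBex : ∀ j : ℕ, ∃ b, Q b ∧ (j < n → b ≠ a ∧
      ((tail b = v j ∧ head b = v (j + 1)) ∨ (tail b = v (j + 1) ∧ head b = v j))) := by
    intro j
    by_cases hj : j < n
    · obtain ⟨b, h1, h2, h3⟩ := hG _ _ (hadj j hj)
      exact ⟨b, h1, fun _ => ⟨h2, h3⟩⟩
    · exact ⟨a, hQa, fun h => absurd h hj⟩
  choose B hBQ hBspec using hBex
  set O : ℕ → Bool := fun j => decide (tail (B j) = v j) with hO
  have hBstart : ∀ j, j < n → (if O j then tail (B j) else head (B j)) = v j := by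
    intro j hj
    obtain ⟨hba, hor⟩ := hBspec j hj
    have hne := (hadj j hj).ne
    rcases hor with ⟨h1, h2⟩ | ⟨h1, h2⟩
    · have ht : O j = true := by rw [hO]; exact decide_eq_true h1
      rw [ht, if_pos rfl]; exact h1
    · have hf : O j = false := by
        rw [hO]; exact decide_eq_false fun hh => hne (hh.symm.trans h1)
      rw [hf]; simpa using h2
  have hBend : ∀ j, j < n → (if O j then head (B j) else tail (B j)) = v (j + 1) := by
    intro j hj
    obtain ⟨hba, hor⟩ := hBspec j hj
    have hne := (hadj j hj).ne
    rcases hor with ⟨h1, h2⟩ | ⟨h1, h2⟩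
    · have ht : O j = true := by rw [hO]; exact decide_eq_true h1
      rw [ht, if_pos rfl]; exact h2
    · have hf : O j = false := by
        rw [hO]; exact decide_eq_false fun hh => hne (hh.symm.trans h1)
      rw [hf]; simpa using h1
  have hBne : ∀ j, j < n → B j ≠ a := fun j hj => (hBspec j hj).1
  refine ⟨n, fun i => if (i : ℕ) = 0 then a else B ((i : ℕ) - 1),
      fun i => if (i : ℕ) = 0 then true else O ((i : ℕ) - 1), ?_, ?_, ?_, ?_⟩
  -- start vertex computation
  · intro i
    by_cases h0 : (i : ℕ) = 0 <;> simp [h0, hQa, hBQ]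
  · intro i i' hii
    simp only at hii
    have hi := i.isLt
    have hi' := i'.isLt
    by_cases h0 : (i : ℕ) = 0 <;> by_cases h0' : (i' : ℕ) = 0
    · exact Fin.ext (h0.trans h0'.symm)
    · rw [if_pos h0, if_neg h0'] at hii
      exact absurd hii.symm (hBne _ (by omega))
    · rw [if_neg h0, if_pos h0'] at hii
      exact absurd hii (hBne _ (by omega))
    · rw [if_neg h0, if_neg h0'] at hii
      set m := (i : ℕ) - 1 with hm
      set m' := (i' : ℕ) - 1 with hm'
      have hmn : m < n := by omega
      have hmn' : m' < n := by omega
      have e1 := hBstart m hmn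
      have e2 := hBend m hmn
      have e1' := hBstart m' hmn'
      have e2' := hBend m' hmn'
      rw [hii] at e1 e2
      have hmm : m = m' := by
        by_cases hOm : O m = true <;> by_cases hOm' : O m' = true <;>
          simp only [hOm, hOm', if_true, if_false] at e1 e2 e1' e2'
        · exact hvinj m (by omega) m' (by omega) (e1.symm.trans e1')
        · have q1 := hvinj m (by omega) (m' + 1) (by omega) (e1.symm.trans e2')
          have q2 := hvinj (m + 1) (by omega) m' (by omega) (e2.symm.trans e1')
          omega
        · have q1 := hvinj m (by omega) (m' + 1) (by omega) (e1.symm.trans e2')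
          have q2 := hvinj (m + 1) (by omega) m' (by omega) (e2.symm.trans e1')
          omega
        · exact hvinj m (by omega) m' (by omega) (e1.symm.trans e1')
      exact Fin.ext (by omega)
  · have hs : ∀ i : Fin (n + 1),
        (if (if (i : ℕ) = 0 then true else O ((i : ℕ) - 1))
          then tail (if (i : ℕ) = 0 then a else B ((i : ℕ) - 1))
          else head (if (i : ℕ) = 0 then a else B ((i : ℕ) - 1)))
        = v (if (i : ℕ) = 0 then n else (i : ℕ) - 1) := by
      intro i
      by_cases h0 : (i : ℕ) = 0
      · simp only [h0, if_pos rfl, if_true]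
        exact hvn.symm
      · have hmn : (i : ℕ) - 1 < n := by have := i.isLt; omega
        simp only [if_neg h0]
        exact hBstart _ hmn
    intro i i' hii
    simp only at hii
    have hii' : v (if (i : ℕ) = 0 then n else (i : ℕ) - 1)
        = v (if (i' : ℕ) = 0 then n else (i' : ℕ) - 1) := by
      rw [← hs i, ← hs i']; exact hii
    have hi := i.isLt
    have hi' := i'.isLt
    have h2 := hvinj _ (by split <;> omega) _ (by split <;> omega) hii'
    apply Fin.ext
    by_cases h0 : (i : ℕ) = 0 <;> by_cases h0' : (i' : ℕ) = 0 <;>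
      simp only [h0, h0', if_pos, if_neg, if_true, if_false] at h2 <;> omega
  · have hs : ∀ i : Fin (n + 1),
        (if (if (i : ℕ) = 0 then true else O ((i : ℕ) - 1))
          then tail (if (i : ℕ) = 0 then a else B ((i : ℕ) - 1))
          else head (if (i : ℕ) = 0 then a else B ((i : ℕ) - 1)))
        = v (if (i : ℕ) = 0 then n else (i : ℕ) - 1) := by
      intro i
      by_cases h0 : (i : ℕ) = 0
      · simp only [h0, if_pos rfl, if_true]
        exact hvn.symm
      · have hmn : (i : ℕ) - 1 < n := by have := i.isLt; omega
        simp only [if_neg h0]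
        exact hBstart _ hmn
    have he : ∀ i : Fin (n + 1),
        (if (if (i : ℕ) = 0 then true else O ((i : ℕ) - 1))
          then head (if (i : ℕ) = 0 then a else B ((i : ℕ) - 1))
          else tail (if (i : ℕ) = 0 then a else B ((i : ℕ) - 1)))
        = v (i : ℕ) := by
      intro i
      by_cases h0 : (i : ℕ) = 0
      · simp only [h0, if_pos rfl, if_true]
        exact hv0.symm
      · have hmn : (i : ℕ) - 1 < n := by have := i.isLt; omega
        simp only [if_neg h0]
        have := hBend _ hmn
        rw [this]
        congr 1
        omega
    intro i
    rw [he i, hs (i + 1)]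
    by_cases hl : i = Fin.last n
    · have h1 : ((i + 1 : Fin (n + 1)) : ℕ) = 0 := by
        rw [Fin.val_add_one, if_pos hl]
      rw [if_pos h1, hl, Fin.val_last]
    · have h1 : ((i + 1 : Fin (n + 1)) : ℕ) = (i : ℕ) + 1 := by
        rw [Fin.val_add_one, if_neg hl]
      rw [h1]
      simp

end Stmt6Aux

section KeyLemma

theorem stmt6_key {V E : Type*} [Fintype V] [Fintype E] [DecidableEq V]
    (tail head : E → V) (C' : E → ℝ → ℝ)
    (hdich : ∀ a, (∃ γ, ∀ t, C' a t = γ) ∨ StrictMono (C' a))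
    (F : Finset E)
    (hacyc : ¬ ∃ k : ℕ, ∃ (c : Fin (k + 1) → E) (s : Fin (k + 1) → Bool),
      (∀ i, c i ∈ F ∧ ∃ γ, ∀ t, C' (c i) t = γ) ∧
      Function.Injective c ∧
      Function.Injective (fun i => if s i then tail (c i) else head (c i)) ∧
      ∀ i : Fin (k + 1), (if s i then head (c i) else tail (c i)) =
        (if s (i + 1) then tail (c (i + 1)) else head (c (i + 1))))
    (x y : E → ℝ)
    (hx0 : ∀ a, a ∉ F → x a = 0) (hy0 : ∀ a, a ∉ F → y a = 0)
    (πx : V → ℝ) (hπx : ∀ a ∈ F, πx (head a) - πx (tail a) = C' a (x a))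
    (πy : V → ℝ) (hπy : ∀ a ∈ F, πy (head a) - πy (tail a) = C' a (y a))
    (a : E) :
    x a - y a ≤ ∑ i : V, |netInflow tail head x i - netInflow tail head y i| := by
  classical
  have hRHS0 : (0:ℝ) ≤ ∑ i : V, |netInflow tail head x i - netInflow tail head y i| :=
    Finset.sum_nonneg fun i _ => abs_nonneg _
  by_cases haF : a ∈ F
  swap
  · rw [hx0 a haF, hy0 a haF]; simpa using hRHS0
  rcases le_or_gt (x a) (y a) with hle | hza
  · linarith
  -- potential difference
  set π : V → ℝ := fun i => πx i - πy i with hπdef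
  have hπd : ∀ b ∈ F, π (head b) - π (tail b) = C' b (x b) - C' b (y b) := by
    intro b hb
    have h1 := hπx b hb
    have h2 := hπy b hb
    simp only [hπdef]
    linarith
  have hlin : ∀ b ∈ F, (∃ γ, ∀ t, C' b t = γ) → π (head b) = π (tail b) := by
    intro b hb ⟨γ, hγ⟩
    have := hπd b hb
    rw [hγ (x b), hγ (y b)] at this
    linarith
  have hmono_le : ∀ b ∈ F, StrictMono (C' b) → π (tail b) ≤ π (head b) → y b ≤ x b := by
    intro b hb hsm hle
    by_contra hlt
    push_neg at hlt
    have := hsm hlt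
    have := hπd b hb
    linarith
  have hmono_ge : ∀ b ∈ F, StrictMono (C' b) → π (head b) ≤ π (tail b) → x b ≤ y b := by
    intro b hb hsm hle
    by_contra hlt
    push_neg at hlt
    have := hsm hlt
    have := hπd b hb
    linarith
  set Q : E → Prop := fun b => b ∈ F ∧ ∃ γ, ∀ t, C' b t = γ with hQdef
  set G : SimpleGraph V := lineGraph' tail head Q a with hGdef
  have hπadj : ∀ u w, G.Adj u w → π u = π w := by
    rintro u w ⟨-, b, ⟨hbF, hbl⟩, -, hor⟩
    have h := hlin b hbF hbl
    rcases hor with ⟨h1, h2⟩ | ⟨h1, h2⟩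
    · rw [← h1, ← h2]; exact h.symm
    · rw [← h1, ← h2]; exact h
  have hreachπ : ∀ u w, G.Reachable u w → π u = π w := by
    intro u w h
    obtain ⟨p⟩ := h
    induction p with
    | nil => rfl
    | cons hadj q ih => exact (hπadj _ _ hadj).trans ih
  set θ : ℝ := π (tail a) with hθ
  set S : Finset V :=
    Finset.univ.filter (fun i => θ < π i ∨ (π i = θ ∧ G.Reachable (head a) i)) with hS
  have hmemS : ∀ i, i ∈ S ↔ (θ < π i ∨ (π i = θ ∧ G.Reachable (head a) i)) := by
    intro i; rw [hS, Finset.mem_filter]; simp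
  have hgt : StrictMono (C' a) → θ < π (head a) := by
    intro hsm
    have h1 := hπd a haF
    have h2 := hsm hza
    rw [hθ]
    linarith
  have hheadS : head a ∈ S := by
    rw [hmemS]
    rcases hdich a with hl | hsm
    · exact Or.inr ⟨by rw [hlin a haF hl, hθ], SimpleGraph.Reachable.refl _⟩
    · exact Or.inl (hgt hsm)
  have htailS : tail a ∉ S := by
    rw [hmemS]
    rintro (hlt | ⟨-, hR⟩)
    · rw [← hθ] at hlt; exact lt_irrefl _ hlt
    · rcases hdich a with hl | hsm
      · refine hacyc (cycle_of_reachable tail head Q a ⟨haF, hl⟩ G ?_ hR)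
        rintro u v ⟨-, b, hQb, hba, hor⟩
        exact ⟨b, hQb, hba, hor⟩
      · have h1 := hreachπ _ _ hR
        have h2 := hgt hsm
        rw [← hθ] at h1
        linarith
  have hSlin : ∀ b ∈ F, b ≠ a → (∃ γ, ∀ t, C' b t = γ) → (head b ∈ S ↔ tail b ∈ S) := by
    intro b hbF hba hl
    by_cases hbe : head b = tail b
    · rw [hbe]
    · have hAdj : G.Adj (tail b) (head b) :=
        ⟨fun h => hbe h.symm, b, ⟨hbF, hl⟩, hba, Or.inl ⟨rfl, rfl⟩⟩
      have hπeq := hlin b hbF hl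
      rw [hmemS, hmemS]
      constructor
      · rintro (h | ⟨h1, h2⟩)
        · exact Or.inl (by rw [← hπeq]; exact h)
        · exact Or.inr ⟨by rw [← hπeq]; exact h1, h2.trans hAdj.symm.reachable⟩
      · rintro (h | ⟨h1, h2⟩)
        · exact Or.inl (by rw [hπeq]; exact h)
        · exact Or.inr ⟨by rw [hπeq]; exact h1, h2.trans hAdj.reachable⟩
  have hin : ∀ b, b ≠ a → head b ∈ S → tail b ∉ S → 0 ≤ x b - y b := by
    intro b hba h1 h2
    by_cases hbF : b ∈ F
    · rcases hdich b with hl | hsm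
      · exact absurd ((hSlin b hbF hba hl).mp h1) h2
      · have ht : ¬ θ < π (tail b) := by
          intro hlt
          exact h2 ((hmemS _).mpr (Or.inl hlt))
        have hh : θ ≤ π (head b) := by
          rcases (hmemS _).mp h1 with h | h
          · exact le_of_lt h
          · exact h.1.ge
        have := hmono_le b hbF hsm (by push_neg at ht; linarith)
        linarith
    · rw [hx0 b hbF, hy0 b hbF]; simp
  have hout : ∀ b, head b ∉ S → tail b ∈ S → x b - y b ≤ 0 := by
    intro b h1 h2
    by_cases hba : b = a
    · subst hba; exact absurd hheadS h1
    by_cases hbF : b ∈ F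
    · rcases hdich b with hl | hsm
      · exact absurd ((hSlin b hbF hba hl).mpr h2) h1
      · have hh : π (head b) ≤ θ := by
          by_contra hlt
          push_neg at hlt
          exact h1 ((hmemS _).mpr (Or.inl hlt))
        have ht : θ ≤ π (tail b) := by
          rcases (hmemS _).mp h2 with h | h
          · exact le_of_lt h
          · exact h.1.ge
        have := hmono_ge b hbF hsm (by linarith)
        linarith
    · rw [hx0 b hbF, hy0 b hbF]; simp
  -- cut identity
  have hcut : ∑ i ∈ S, (netInflow tail head x i - netInflow tail head y i)
      = ∑ b : E, ((if head b ∈ S then x b - y b else 0)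
          - (if tail b ∈ S then x b - y b else 0)) := by
    have h1 : ∀ i, netInflow tail head x i - netInflow tail head y i
        = (∑ b ∈ Finset.univ.filter (fun b => head b = i), (x b - y b))
          - (∑ b ∈ Finset.univ.filter (fun b => tail b = i), (x b - y b)) := by
      intro i
      simp only [netInflow, Finset.sum_sub_distrib]
      ring
    rw [Finset.sum_congr rfl fun i _ => h1 i, Finset.sum_sub_distrib,
      Finset.sum_sub_distrib]
    congr 1
    · calc ∑ i ∈ S, ∑ b ∈ Finset.univ.filter (fun b => head b = i), (x b - y b)
          = ∑ i ∈ S, ∑ b : E, if head b = i then x b - y b else 0 := by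
            exact Finset.sum_congr rfl fun i _ => Finset.sum_filter _ _
        _ = ∑ b : E, ∑ i ∈ S, if head b = i then x b - y b else 0 := Finset.sum_comm
        _ = ∑ b : E, if head b ∈ S then x b - y b else 0 := by
            exact Finset.sum_congr rfl fun b _ => Finset.sum_ite_eq S (head b) _
    · calc ∑ i ∈ S, ∑ b ∈ Finset.univ.filter (fun b => tail b = i), (x b - y b)
          = ∑ i ∈ S, ∑ b : E, if tail b = i then x b - y b else 0 := by
            exact Finset.sum_congr rfl fun i _ => Finset.sum_filter _ _
        _ = ∑ b : E, ∑ i ∈ S, if tail b = i then x b - y b else 0 := Finset.sum_comm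
        _ = ∑ b : E, if tail b ∈ S then x b - y b else 0 := by
            exact Finset.sum_congr rfl fun b _ => Finset.sum_ite_eq S (tail b) _
  set term : E → ℝ := fun b =>
    (if head b ∈ S then x b - y b else 0) - (if tail b ∈ S then x b - y b else 0)
    with hterm
  have hterma : term a = x a - y a := by
    rw [hterm]
    simp only [if_pos hheadS, if_neg htailS]
    ring
  have htermnn : ∀ b ∈ Finset.univ.erase a, 0 ≤ term b := by
    intro b hb
    have hba : b ≠ a := (Finset.mem_erase.mp hb).1
    rw [hterm]
    by_cases h1 : head b ∈ S <;> by_cases h2 : tail b ∈ S <;>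
      simp only [if_pos, if_neg, h1, h2, if_true, if_false]
    · simp
    · have := hin b hba h1 h2; linarith
    · have := hout b h1 h2; linarith
    · simp
  have hbound : x a - y a ≤ ∑ b : E, term b := by
    rw [← Finset.add_sum_erase _ term (Finset.mem_univ a), hterma]
    have := Finset.sum_nonneg htermnn
    linarith
  calc x a - y a ≤ ∑ b : E, term b := hbound
    _ = ∑ i ∈ S, (netInflow tail head x i - netInflow tail head y i) := hcut.symm
    _ ≤ ∑ i ∈ S, |netInflow tail head x i - netInflow tail head y i| :=
        Finset.sum_le_sum fun i _ => le_abs_self _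
    _ ≤ ∑ i : V, |netInflow tail head x i - netInflow tail head y i| :=
        Finset.sum_le_sum_of_subset_of_nonneg (Finset.subset_univ S)
          fun i _ _ => abs_nonneg _

end KeyLemma

/-- if `F` is linear acyclic (its linear arcs contain no undirected cycle:
no cyclic sequence of pairwise distinct linear arcs of `F`, with an orientation
`s : Fin (k+1) → Bool` and pairwise distinct start vertices, consecutive endpoints
matching) and `x, y` are both `F`-tight, then `max_a |x_a − y_a| ≤ Σ_i |ρ_x(i) − ρ_y(i)|`,
here stated as `|x_a − y_a| ≤ Σ_i |ρ_x(i) − ρ_y(i)|` for every arc `a`. -/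
theorem stmt_6 {V E : Type*} [Fintype V] [Fintype E] [DecidableEq V]
    (tail head : E → V) (C C' : E → ℝ → ℝ)
    (hconv : ∀ a, ConvexOn ℝ Set.univ (C a))
    (hderiv : ∀ a t, HasDerivAt (C a) (C' a t) t)
    (hdich : ∀ a, (∃ γ, ∀ t, C' a t = γ) ∨ StrictMono (C' a))
    (F : Finset E)
    (hacyc : ¬ ∃ k : ℕ, ∃ (c : Fin (k + 1) → E) (s : Fin (k + 1) → Bool),
      (∀ i, c i ∈ F ∧ ∃ γ, ∀ t, C' (c i) t = γ) ∧
      Function.Injective c ∧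
      Function.Injective (fun i => if s i then tail (c i) else head (c i)) ∧
      ∀ i : Fin (k + 1), (if s i then head (c i) else tail (c i)) =
        (if s (i + 1) then tail (c (i + 1)) else head (c (i + 1))))
    (x y : E → ℝ)
    (hx0 : ∀ a, a ∉ F → x a = 0) (hy0 : ∀ a, a ∉ F → y a = 0)
    (πx : V → ℝ) (hπx : ∀ a ∈ F, πx (head a) - πx (tail a) = C' a (x a))
    (πy : V → ℝ) (hπy : ∀ a ∈ F, πy (head a) - πy (tail a) = C' a (y a)) :
    ∀ a : E, |x a - y a| ≤ ∑ i : V, |netInflow tail head x i - netInflow tail head y i| := by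
  intro a
  rw [abs_sub_le_iff]
  constructor
  · exact stmt6_key tail head C' hdich F hacyc x y hx0 hy0 πx hπx πy hπy a
  · have h := stmt6_key tail head C' hdich F hacyc y x hy0 hx0 πy hπy πx hπx a
    have heq : ∑ i : V, |netInflow tail head y i - netInflow tail head x i|
        = ∑ i : V, |netInflow tail head x i - netInflow tail head y i| :=
      Finset.sum_congr rfl fun i _ => abs_sub_comm _ _
    linarith
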